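/- Let Ω be a measurable space and X a Hausdorff topological space in which every compact subset is second countable in the relative topology. If F₁, F₂, … : Ω → X is a sequence of closed-valued compact-measurable multifunctions, then the multifunction ω ↦ ⋂_{n≥1} Fₙ(ω) is compact-measurable. -/

import Mathlib

open TopologicalSpace

open Metric Filter Set Topology

/-- The intersection of a sequence of closed-valued compact-measurable multifunctions
into a Hausdorff space with second countable compacts is compact-measurable. -/
theorem stmt_2 {Ω X : Type*} [MeasurableSpace Ω] [TopologicalSpace X] [T2Space X]
    (hX : ∀ K : Set X, IsCompact K → SecondCountableTopology K)
    (F : ℕ → Ω → Set X)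
    (hFcl : ∀ n ω, IsClosed (F n ω))
    (hF : ∀ n, ∀ K : Set X, IsCompact K → MeasurableSet {ω | (F n ω ∩ K).Nonempty}) :
    ∀ K : Set X, IsCompact K → MeasurableSet {ω | ((⋂ n, F n ω) ∩ K).Nonempty} := by
  intro K hK
  haveI := hX K hK
  haveI : CompactSpace K := isCompact_iff_compactSpace.mp hK
  letI : MetricSpace K := TopologicalSpace.metrizableSpaceMetric K
  -- finite covers of K by balls of radius 1/(j+1)
  have hcov : ∀ j : ℕ, ∃ t : Set K, t.Finite ∧
      (Set.univ : Set K) ⊆ ⋃ x ∈ t, ball x (1 / ((j : ℝ) + 1)) := by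
    intro j
    obtain ⟨t, -, htf, htc⟩ := finite_cover_balls_of_compact (isCompact_univ (X := K))
      (e := 1 / ((j : ℝ) + 1)) (by positivity)
    exact ⟨t, htf, htc⟩
  choose t htfin htcov using hcov
  set B : K → ℕ → Set X := fun y j => Subtype.val '' (closedBall y (1 / ((j : ℝ) + 1))) with hB
  have hBcomp : ∀ y j, IsCompact (B y j) := fun y j =>
    (Metric.isClosed_closedBall.isCompact).image continuous_subtype_val
  have key : {ω | ((⋂ n, F n ω) ∩ K).Nonempty} =
      ⋂ (j : ℕ) (N : ℕ), ⋃ y ∈ t j, ⋂ n ∈ Finset.range N,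
        {ω | (F n ω ∩ B y j).Nonempty} := by
    ext ω
    simp only [Set.mem_iInter, Set.mem_iUnion, Set.mem_setOf_eq, Finset.mem_range]
    constructor
    · rintro ⟨x, hxF, hxK⟩ j N
      obtain ⟨y, hy, hxy⟩ := Set.mem_iUnion₂.mp (htcov j (Set.mem_univ ⟨x, hxK⟩))
      refine ⟨y, hy, fun n _ => ⟨x, Set.mem_iInter.mp hxF n,
        ⟨⟨x, hxK⟩, ball_subset_closedBall hxy, rfl⟩⟩⟩
    · intro h
      -- each finite intersection is nonempty
      have hS : ∀ N : ℕ, ((⋂ n ∈ Finset.range N, F n ω) ∩ K).Nonempty := by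
        intro N
        choose y hy hmeet using fun j => h j N
        have hz : ∀ j n, n < N → ∃ z : K,
            z ∈ closedBall (y j) (1 / ((j : ℝ) + 1)) ∧ (z : X) ∈ F n ω := by
          intro j n hn
          obtain ⟨x, hxF, hxB⟩ := hmeet j n hn
          obtain ⟨zz, hzb, rfl⟩ := hxB
          exact ⟨zz, hzb, hxF⟩
        choose z hz1 hz2 using hz
        obtain ⟨p, -, φ, hφ, hyp⟩ :=
          (isCompact_univ (X := K)).tendsto_subseq (x := y) (fun j => Set.mem_univ (y j))
        refine ⟨p, ?_, p.2⟩
        simp only [Set.mem_iInter, Finset.mem_range]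
        intro n hn
        have hconv : Tendsto (fun j => (z (φ j) n hn : X)) atTop (𝓝 (p : X)) := by
          have hd : Tendsto (fun j => dist (z (φ j) n hn) p) atTop (𝓝 0) := by
            have hle : ∀ j, dist (z (φ j) n hn) p ≤
                1 / ((φ j : ℝ) + 1) + dist (y (φ j)) p := fun j =>
              (dist_triangle _ (y (φ j)) p).trans
                (add_le_add_left (hz1 (φ j) n hn) _)
            have h1 : Tendsto (fun j => 1 / ((φ j : ℝ) + 1) + dist (y (φ j)) p)
                atTop (𝓝 0) := by
              have ha : Tendsto (fun j => 1 / ((φ j : ℝ) + 1)) atTop (𝓝 0) :=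
                tendsto_one_div_add_atTop_nhds_zero_nat.comp hφ.tendsto_atTop
              have hb : Tendsto (fun j => dist (y (φ j)) p) atTop (𝓝 0) :=
                tendsto_iff_dist_tendsto_zero.mp hyp
              simpa using ha.add hb
            exact squeeze_zero (fun j => dist_nonneg) hle h1
          have hK' : Tendsto (fun j => z (φ j) n hn) atTop (𝓝 p) :=
            tendsto_iff_dist_tendsto_zero.mpr hd
          exact (continuous_subtype_val.tendsto p).comp hK'
        exact (hFcl n ω).mem_of_tendsto hconv
          (Filter.Eventually.of_forall fun j => hz2 (φ j) n hn)
      -- pass to the limit via Cantor's intersection theorem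
      set U : ℕ → Set X := fun N => (⋂ n ∈ Finset.range N, F n ω) ∩ K with hU
      have hUdec : ∀ N, U (N + 1) ⊆ U N := by
        intro N x hx
        exact ⟨Set.mem_iInter₂.mpr fun n hn => Set.mem_iInter₂.mp hx.1 n
          (Finset.mem_range.mpr (Nat.lt_succ_of_lt (Finset.mem_range.mp hn))), hx.2⟩
      have hUcl : ∀ N, IsClosed (U N) := fun N =>
        (isClosed_biInter fun n _ => hFcl n ω).inter hK.isClosed
      have hU0 : IsCompact (U 0) := hK.inter_left (isClosed_biInter fun n _ => hFcl n ω)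
      have := IsCompact.nonempty_iInter_of_sequence_nonempty_isCompact_isClosed U
        hUdec hS hU0 hUcl
      obtain ⟨x, hx⟩ := this
      simp only [hU, Set.mem_iInter, Set.mem_inter_iff, Finset.mem_range] at hx
      refine ⟨x, Set.mem_iInter.mpr fun n => (hx (n + 1)).1 n (Nat.lt_succ_self n),
        (hx 0).2⟩
  rw [key]
  refine MeasurableSet.iInter fun j => MeasurableSet.iInter fun N => ?_
  refine MeasurableSet.biUnion (htfin j).countable fun y _ => ?_
  exact MeasurableSet.iInter fun n => MeasurableSet.iInter fun _ => hF n _ (hBcomp y j)
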